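/- Let H = (V1,...,Vd, E) be a d-partite d-uniform hypergraph, and fix a type i. Let H_i be the (d−1)-partite hypergraph whose edges E_i are the edges of H with the type-i vertex removed, and let B_i be the bipartite graph on (V_i, E_i) where v ∈ V_i is joined to Y ∈ E_i whenever {v} ∪ Y ∈ E. Then for any subsets W_j ⊆ V_j (j = 1,...,d): disc_H(W_1,...,W_d) ≤ disc_{B_i}(W_i, E_i(W_1,...,W_d)) + (|W_i|/|V_i|)·disc_{H_i}(W_1,...,W_{i−1},W_{i+1},...,W_d). -/
import Mathlib


open scoped BigOperators

/-- Remove the coordinate of type `i` from an edge of a `d`-partite hypergraph. -/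
def coordRestrict (d : ℕ) (V : Fin d → Type) (i : Fin d) (e : ∀ j, V j) :
    ∀ j : {j : Fin d // j ≠ i}, V j.1 :=
  fun j => e j.1

/-- For a `d`-partite `d`-uniform hypergraph `H = (V₁,…,V_d,E)`, a type `i`,
the induced hypergraph `H_i` (type-`i` vertices removed) and the vertex-vs-wall bipartite
graph `B_i`, and any subsets `W_j ⊆ V_j`:
`disc_H(W₁,…,W_d) ≤ disc_{B_i}(W_i, E_i(W₁,…,W_d)) + (|W_i|/|V_i|)·disc_{H_i}(W₁,…,Ŵ_i,…,W_d)`. -/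
theorem hypergraph_discrepancy_reduction
    (d : ℕ) (V : Fin d → Type) [∀ j, Fintype (V j)] [∀ j, DecidableEq (V j)]
    (E : Finset (∀ j, V j)) (i : Fin d) (W : ∀ j, Finset (V j)) :
    -- the walls of cotype `i`
    let Ei : Finset (∀ j : {j : Fin d // j ≠ i}, V j.1) := E.image (coordRestrict d V i)
    -- the walls of cotype `i` with all vertices in the sets `W_j`, `j ≠ i`
    let EiW : Finset (∀ j : {j : Fin d // j ≠ i}, V j.1) :=
      Ei.filter fun y => ∀ j : {j : Fin d // j ≠ i}, y j ∈ W j.1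
    -- discrepancy of `W₁,…,W_d` in `H`
    let discH : ℝ :=
      |((E.filter fun e => ∀ j, e j ∈ W j).card : ℝ) / E.card -
        ∏ j, ((W j).card : ℝ) / Fintype.card (V j)|
    -- discrepancy of `(W_i, E_i(W₁,…,W_d))` in the bipartite graph `B_i`
    let discBi : ℝ :=
      |((E.filter fun e => e i ∈ W i ∧ coordRestrict d V i e ∈ EiW).card : ℝ) / E.card -
        (((W i).card : ℝ) / Fintype.card (V i)) * ((EiW.card : ℝ) / Ei.card)|
    -- discrepancy of `W₁,…,Ŵ_i,…,W_d` in the induced hypergraph `H_i`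
    let discHi : ℝ :=
      |((EiW.card : ℝ) / Ei.card) -
        ∏ j : {j : Fin d // j ≠ i}, ((W j.1).card : ℝ) / Fintype.card (V j.1)|
    discH ≤ discBi + (((W i).card : ℝ) / Fintype.card (V i)) * discHi := by
  intro Ei EiW discH discBi discHi
  have hfilter : (E.filter fun e => ∀ j, e j ∈ W j) =
      (E.filter fun e => e i ∈ W i ∧ coordRestrict d V i e ∈ EiW) := by
    apply Finset.filter_congr
    intro e he
    simp only [EiW, Ei, Finset.mem_filter, Finset.mem_image]
    constructor
    · intro h
      exact ⟨h i, ⟨⟨e, he, rfl⟩, fun j => h j.1⟩⟩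
    · intro ⟨h1, _, h2⟩ j
      by_cases hj : j = i
      · subst hj; exact h1
      · exact h2 ⟨j, hj⟩
  have hprod : (∏ j, ((W j).card : ℝ) / Fintype.card (V j)) =
      (((W i).card : ℝ) / Fintype.card (V i)) *
        ∏ j : {j : Fin d // j ≠ i}, ((W j.1).card : ℝ) / Fintype.card (V j.1) := by
    rw [← Finset.mul_prod_erase Finset.univ _ (Finset.mem_univ i)]
    congr 1
    exact Finset.prod_subtype (Finset.univ.erase i) (fun x => by simp)
      (fun j => ((W j).card : ℝ) / Fintype.card (V j))
  set x : ℝ := ((E.filter fun e => e i ∈ W i ∧ coordRestrict d V i e ∈ EiW).card : ℝ) / E.card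
  set p : ℝ := ((W i).card : ℝ) / Fintype.card (V i)
  set r : ℝ := (EiW.card : ℝ) / Ei.card
  set q : ℝ := ∏ j : {j : Fin d // j ≠ i}, ((W j.1).card : ℝ) / Fintype.card (V j.1)
  have hp : 0 ≤ p := by positivity
  have h1 : discH = |x - p * q| := by
    simp only [discH]
    rw [hfilter, hprod]
  have h2 : x - p * q = (x - p * r) + p * (r - q) := by ring
  calc discH = |x - p * q| := h1
    _ = |(x - p * r) + p * (r - q)| := by rw [h2]
    _ ≤ |x - p * r| + |p * (r - q)| := abs_add_le _ _
    _ = |x - p * r| + p * |r - q| := by rw [abs_mul, abs_of_nonneg hp]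
    _ = discBi + p * discHi := rfl
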